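/- arXiv:1712.04425 — 6 statements merged into one kernel-verified Lean document; each statement's English description precedes it below -/
import Mathlib

section
/- For every integer m ≥ 4, the numbers 2^m - 1 and 2^m have the same leading digit in base 10: D(2^m - 1) = D(2^m). -/
open Filter

/-- `x` has leading digit `d` in base 10: `d·10^k ≤ x < (d+1)·10^k` for some integer `k`. -/
def HasLeadingDigit (x : ℝ) (d : ℕ) : Prop :=
  ∃ k : ℤ, (d : ℝ) * 10 ^ k ≤ x ∧ x < ((d : ℝ) + 1) * 10 ^ k

/-- The Benford frequency `P(d) = log₁₀ (1 + 1/d)` of digit `d`. -/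
noncomputable def benfordP (d : ℕ) : ℝ := Real.logb 10 (1 + 1 / (d : ℝ))

/-- A sequence is Benford distributed if for each digit `d ∈ {1,…,9}` the density of
indices `n` with `D(a_n) = d` equals `P(d)`. -/
def BenfordDistributed (a : ℕ → ℝ) : Prop :=
  ∀ d : ℕ, 1 ≤ d → d ≤ 9 →
    Tendsto
      (fun N : ℕ =>
        (Nat.card {n : ℕ | 1 ≤ n ∧ n ≤ N ∧ HasLeadingDigit (a n) d} : ℝ) / N)
      atTop (nhds (benfordP d))

/-- A sequence is locally Benford distributed of order `k` if every `k`-tuple of digits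
in `{1,…,9}` occurs among leading digits of `k` consecutive terms with density
`P(d₀)⋯P(d_{k-1})`. -/
def LocallyBenfordDistributed (a : ℕ → ℝ) (k : ℕ) : Prop :=
  ∀ d : Fin k → ℕ, (∀ i, 1 ≤ d i ∧ d i ≤ 9) →
    Tendsto
      (fun N : ℕ =>
        (Nat.card {n : ℕ | 1 ≤ n ∧ n ≤ N ∧
            ∀ i : Fin k, HasLeadingDigit (a (n + (i : ℕ))) (d i)} : ℝ) / N)
      atTop (nhds (∏ i : Fin k, benfordP (d i)))

/-- `waitingTime a d i` is the waiting time `w_i(d) = n_{i+1}^{(d)} - n_i^{(d)}`, where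
`n_1^{(d)} < n_2^{(d)} < ⋯` enumerates `{n ∈ ℕ, n ≥ 1 : D(a_n) = d}`
(the `j`-th element of this set, 1-indexed, being `Nat.nth · (j-1)`). -/
noncomputable def waitingTime (a : ℕ → ℝ) (d : ℕ) (i : ℕ) : ℕ :=
  Nat.nth (fun n => 1 ≤ n ∧ HasLeadingDigit (a n) d) i -
    Nat.nth (fun n => 1 ≤ n ∧ HasLeadingDigit (a n) d) (i - 1)

/-- A sequence has Benford distributed waiting times if for each digit `d ∈ {1,…,9}`
the waiting times between occurrences of leading digit `d` take value `k` with density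
`P(d)(1-P(d))^{k-1}`. -/
def BenfordWaitingTimes (a : ℕ → ℝ) : Prop :=
  ∀ d : ℕ, 1 ≤ d → d ≤ 9 → ∀ k : ℕ, 1 ≤ k →
    Tendsto
      (fun N : ℕ =>
        (Nat.card {i : ℕ | 1 ≤ i ∧ i ≤ N ∧ waitingTime a d i = k} : ℝ) / N)
      atTop (nhds (benfordP d * (1 - benfordP d) ^ (k - 1)))

/-- A sequence `u` of real numbers is uniformly distributed modulo 1. -/
def UniformlyDistributedMod1 (u : ℕ → ℝ) : Prop :=
  ∀ t : ℝ, 0 ≤ t → t ≤ 1 →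
    Tendsto
      (fun N : ℕ =>
        (Nat.card {n : ℕ | 1 ≤ n ∧ n ≤ N ∧ Int.fract (u n) ≤ t} : ℝ) / N)
      atTop (nhds t)

/-- `nthPrime n` is the `n`-th prime (1-indexed): `nthPrime 1 = 2`, `nthPrime 2 = 3`, … -/
noncomputable def nthPrime (n : ℕ) : ℕ := Nat.nth Nat.Prime (n - 1)

lemma two_pow_ne_mul_pow_ten (m d' K : ℕ) (hK : 1 ≤ K) : 2 ^ m ≠ d' * 10 ^ K := by
  intro h
  have h5 : (5 : ℕ) ∣ 2 ^ m := by
    rw [h]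
    exact Dvd.dvd.mul_left (dvd_pow (by norm_num) (by omega)) d'
  have := Nat.Prime.dvd_of_dvd_pow (p := 5) (by norm_num) h5
  omega

lemma pow_bound (m : ℕ) (hm : 4 ≤ m) : (16 : ℕ) ≤ 2 ^ m := by
  calc (16 : ℕ) = 2 ^ 4 := by norm_num
  _ ≤ 2 ^ m := Nat.pow_le_pow_right (by norm_num) hm

lemma k_ge_one (d : ℕ) (hd9 : d ≤ 9) (k : ℤ) (x : ℝ) (hx : 15 ≤ x)
    (h : x < ((d : ℝ) + 1) * 10 ^ k) : 1 ≤ k := by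
  by_contra hk
  push_neg at hk
  have h10 : (10 : ℝ) ^ k ≤ 10 ^ (0 : ℤ) :=
    zpow_le_zpow_right₀ (by norm_num) (by omega)
  have hd : ((d : ℝ) + 1) ≤ 10 := by
    have : (d : ℝ) ≤ 9 := by exact_mod_cast hd9
    linarith
  have hpos : (0 : ℝ) < 10 ^ k := zpow_pos (by norm_num) k
  nlinarith [zpow_zero (10 : ℝ)]


/-- For `m ≥ 4`, the numbers `2^m - 1` and `2^m` have the same leading digit. -/
theorem leadingDigit_two_pow_sub_one (m : ℕ) (hm : 4 ≤ m) (d : ℕ)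
    (hd1 : 1 ≤ d) (hd9 : d ≤ 9) :
    HasLeadingDigit ((2 : ℝ) ^ m - 1) d ↔ HasLeadingDigit ((2 : ℝ) ^ m) d := by
  have h16 : (16 : ℕ) ≤ 2 ^ m := pow_bound m hm
  have hcast : ((2 : ℝ) ^ m) = ((2 ^ m : ℕ) : ℝ) := by push_cast; ring
  have hcast1 : ((2 : ℝ) ^ m - 1) = ((2 ^ m - 1 : ℕ) : ℝ) := by
    rw [Nat.cast_sub (by omega)]; push_cast; ring
  constructor
  · rintro ⟨k, h1, h2⟩
    have hx : (15 : ℝ) ≤ (2 : ℝ) ^ m - 1 := by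
      rw [hcast1]; exact_mod_cast (by omega : (15 : ℕ) ≤ 2 ^ m - 1)
    have hk : 1 ≤ k := k_ge_one d hd9 k _ hx h2
    have hkK : k = (k.toNat : ℤ) := (Int.toNat_of_nonneg (by omega)).symm
    set K := k.toNat with hKdef
    have hK1 : 1 ≤ K := by omega
    have hzpow : (10 : ℝ) ^ k = ((10 ^ K : ℕ) : ℝ) := by
      rw [hkK, zpow_natCast]; push_cast; ring
    refine ⟨k, by linarith [h1, hx], ?_⟩
    -- show 2^m < (d+1) * 10^k
    have hlt : (2 ^ m - 1 : ℕ) < (d + 1) * 10 ^ K := by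
      have h2' := h2
      rw [hcast1, hzpow] at h2'
      exact_mod_cast h2' 
    have hle : 2 ^ m ≤ (d + 1) * 10 ^ K := by omega
    have hne : 2 ^ m ≠ (d + 1) * 10 ^ K := two_pow_ne_mul_pow_ten m (d + 1) K hK1
    have : 2 ^ m < (d + 1) * 10 ^ K := lt_of_le_of_ne hle hne
    rw [hcast, hzpow]
    exact_mod_cast (by exact_mod_cast this : ((2 ^ m : ℕ) : ℝ) < (((d + 1) * 10 ^ K : ℕ) : ℝ))
  · rintro ⟨k, h1, h2⟩
    have hx : (15 : ℝ) ≤ (2 : ℝ) ^ m := by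
      rw [hcast]; exact_mod_cast (by omega : (15 : ℕ) ≤ 2 ^ m)
    have hk : 1 ≤ k := k_ge_one d hd9 k _ hx h2
    have hkK : k = (k.toNat : ℤ) := (Int.toNat_of_nonneg (by omega)).symm
    set K := k.toNat with hKdef
    have hK1 : 1 ≤ K := by omega
    have hzpow : (10 : ℝ) ^ k = ((10 ^ K : ℕ) : ℝ) := by
      rw [hkK, zpow_natCast]; push_cast; ring
    refine ⟨k, ?_, by linarith⟩
    -- show d * 10^k ≤ 2^m - 1, i.e. d * 10^K < 2^m
    have hle : d * 10 ^ K ≤ 2 ^ m := by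
      have h1' := h1
      rw [hcast, hzpow] at h1'
      exact_mod_cast h1' 
    have hne : 2 ^ m ≠ d * 10 ^ K := two_pow_ne_mul_pow_ten m d K hK1
    have hlt : d * 10 ^ K ≤ 2 ^ m - 1 := by omega
    rw [hcast1, hzpow]
    exact_mod_cast (by exact_mod_cast hlt : ((d * 10 ^ K : ℕ) : ℝ) ≤ ((2 ^ m - 1 : ℕ) : ℝ))
end

section
/- Let {a_n} be a sequence of positive real numbers such that for each digit d ∈ {1,...,9} the set {n ∈ ℕ : D(a_n) = d} is infinite. Then {a_n} is Benford distributed if and only if for every d ∈ {1,...,9}, the waiting times satisfy lim_{N→∞} (1/N)·Σ_{i≤N} w_i(d) = 1/P(d). -/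
open Filter

open scoped Classical


private lemma aux_nth_tendsto {p : ℕ → Prop} (hp : (setOf p).Infinite) :
    Tendsto (fun n => Nat.nth p n) atTop atTop :=
  tendsto_atTop_mono (fun _ => Nat.le_nth (fun hf => absurd hf hp)) tendsto_id

private lemma aux_count_tendsto {p : ℕ → Prop} [DecidablePred p] (hp : (setOf p).Infinite) :
    Tendsto (fun n => Nat.count p n) atTop atTop := by
  refine tendsto_atTop_atTop_of_monotone (Nat.count_monotone p) (fun b => ?_)
  exact ⟨Nat.nth p b + 1, by rw [Nat.count_nth_succ_of_infinite hp]; omega⟩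

private lemma aux_nat_div_succ : Tendsto (fun N : ℕ => (N : ℝ) / (N + 1)) atTop (nhds 1) := by
  have h0 := tendsto_one_div_add_atTop_nhds_zero_nat (𝕜 := ℝ)
  have h := (tendsto_const_nhds : Tendsto (fun _ : ℕ => (1:ℝ)) atTop (nhds 1)).sub h0
  rw [sub_zero] at h
  refine h.congr (fun N => ?_)
  have : ((N : ℝ) + 1) ≠ 0 := by positivity
  field_simp
  ring

private lemma aux_succ_div_nat : Tendsto (fun N : ℕ => ((N : ℝ) + 1) / N) atTop (nhds 1) := by
  have h0 := tendsto_one_div_atTop_nhds_zero_nat (𝕜 := ℝ)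
  have h := (tendsto_const_nhds : Tendsto (fun _ : ℕ => (1:ℝ)) atTop (nhds 1)).add h0
  rw [add_zero] at h
  refine h.congr' ?_
  filter_upwards [eventually_ge_atTop 1] with N hN
  have : (N : ℝ) ≠ 0 := by positivity
  field_simp

private lemma aux_shift_iff (u : ℕ → ℝ) (P : ℝ) :
    Tendsto (fun N : ℕ => u (N + 1) / N) atTop (nhds P) ↔
      Tendsto (fun N : ℕ => u N / N) atTop (nhds P) := by
  constructor
  · intro h
    rw [← tendsto_add_atTop_iff_nat 1]
    have h2 := h.mul aux_nat_div_succ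
    rw [mul_one] at h2
    refine h2.congr' ?_
    filter_upwards [eventually_ge_atTop 1] with N hN
    have hN0 : (N : ℝ) ≠ 0 := by positivity
    have hN1 : ((N : ℝ) + 1) ≠ 0 := by positivity
    push_cast
    field_simp
  · intro h
    have h1 := (tendsto_add_atTop_iff_nat 1).2 h
    have h2 := h1.mul aux_succ_div_nat
    rw [mul_one] at h2
    refine h2.congr' ?_
    filter_upwards [eventually_ge_atTop 1] with N hN
    have hN0 : (N : ℝ) ≠ 0 := by positivity
    have hN1 : ((N : ℝ) + 1) ≠ 0 := by positivity
    push_cast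
    field_simp

private lemma aux_card_eq_count (q : ℕ → Prop) [DecidablePred q] (N : ℕ) :
    (Nat.card {n : ℕ | 1 ≤ n ∧ n ≤ N ∧ q n}) =
      Nat.count (fun n => 1 ≤ n ∧ q n) (N + 1) := by
  rw [Nat.count_eq_card_filter_range]
  have : {n : ℕ | 1 ≤ n ∧ n ≤ N ∧ q n} =
      ↑((Finset.range (N + 1)).filter fun n => 1 ≤ n ∧ q n) := by
    ext n
    simp [Nat.lt_succ_iff]
    tauto
  rw [this, Nat.card_coe_set_eq, Set.ncard_coe_finset]

private lemma aux_count_to_nth {p : ℕ → Prop} [DecidablePred p] (hp : (setOf p).Infinite) {P : ℝ} (hP : 0 < P)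
    (h : Tendsto (fun N : ℕ => (Nat.count p N : ℝ) / N) atTop (nhds P)) :
    Tendsto (fun N : ℕ => (Nat.nth p N : ℝ) / N) atTop (nhds (1 / P)) := by
  have h3 : Tendsto (fun N : ℕ => ((N : ℝ)) / (Nat.nth p N)) atTop (nhds P) := by
    have h2 := h.comp (aux_nth_tendsto hp)
    simpa only [Function.comp_def, Nat.count_nth_of_infinite hp] using h2
  have h4 := h3.inv₀ hP.ne'
  simpa [inv_div, one_div] using h4

private lemma aux_nth_to_count {p : ℕ → Prop} [DecidablePred p] (hp : (setOf p).Infinite) {P : ℝ} (hP : 0 < P)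
    (h : Tendsto (fun N : ℕ => (Nat.nth p N : ℝ) / N) atTop (nhds (1 / P))) :
    Tendsto (fun N : ℕ => (Nat.count p N : ℝ) / N) atTop (nhds P) := by
  have g : Tendsto (fun N : ℕ => (N : ℝ) / Nat.nth p N) atTop (nhds P) := by
    have h2 := h.inv₀ (by positivity : (1 : ℝ) / P ≠ 0)
    simpa [inv_div, one_div] using h2
  have hnth := aux_nth_tendsto hp
  have hcount := aux_count_tendsto hp
  have hinv : Tendsto (fun N : ℕ => ((Nat.nth p N : ℝ))⁻¹) atTop (nhds 0) :=
    (tendsto_natCast_atTop_atTop.comp hnth).inv_tendsto_atTop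
  have hV : Tendsto (fun N : ℕ => ((N : ℝ) + 1) / Nat.nth p N) atTop (nhds P) := by
    have h2 := g.add hinv
    rw [add_zero] at h2
    refine h2.congr (fun N => ?_)
    rw [add_div, one_div]
  -- lower bound function
  have hL : Tendsto (fun n : ℕ => (Nat.count p n : ℝ) / Nat.nth p (Nat.count p n))
      atTop (nhds P) := by
    have h2 := g.comp hcount
    simpa only [Function.comp_def] using h2
  -- upper bound function
  have hU : Tendsto (fun n : ℕ => (Nat.count p n : ℝ) / Nat.nth p (Nat.count p n - 1))
      atTop (nhds P) := by
    have hsub : Tendsto (fun n : ℕ => Nat.count p n - 1) atTop atTop :=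
      tendsto_atTop_atTop.2 fun b => by
        obtain ⟨N, hN⟩ := tendsto_atTop_atTop.1 hcount (b + 1)
        exact ⟨N, fun n hn => by have := hN n hn; omega⟩
    have h2 := hV.comp hsub
    simp only [Function.comp_def] at h2
    refine h2.congr' ?_
    filter_upwards [hcount.eventually_ge_atTop 1] with n hn
    have : ((Nat.count p n - 1 : ℕ) : ℝ) + 1 = (Nat.count p n : ℝ) := by
      have : Nat.count p n - 1 + 1 = Nat.count p n := by omega
      exact_mod_cast congrArg (Nat.cast : ℕ → ℝ) this
    rw [this]
  refine tendsto_of_tendsto_of_tendsto_of_le_of_le' hL hU ?_ ?_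
  · filter_upwards [hcount.eventually_ge_atTop 2, eventually_ge_atTop 1] with n hc hn
    have hle : n ≤ Nat.nth p (Nat.count p n) := Nat.le_nth_count hp n
    have hn0 : (0 : ℝ) < n := by exact_mod_cast hn
    gcongr

  · filter_upwards [hcount.eventually_ge_atTop 2, eventually_ge_atTop 1] with n hc hn
    have hlt : Nat.nth p (Nat.count p n - 1) < n :=
      Nat.nth_lt_of_lt_count (by omega)
    have hpos : 0 < Nat.nth p (Nat.count p n - 1) := by
      have h01 : Nat.nth p 0 < Nat.nth p 1 := (Nat.nth_lt_nth hp).2 one_pos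
      have h1le : Nat.nth p 1 ≤ Nat.nth p (Nat.count p n - 1) :=
        Nat.nth_monotone hp (by omega)
      omega
    have hp0 : (0 : ℝ) < (Nat.nth p (Nat.count p n - 1) : ℝ) := by exact_mod_cast hpos
    gcongr


private lemma benfordP_pos {d : ℕ} (hd : 1 ≤ d) : 0 < benfordP d := by
  have hd0 : (0 : ℝ) < d := by exact_mod_cast hd
  have : (0 : ℝ) < 1 / d := by positivity
  exact Real.logb_pos (by norm_num) (by linarith)

private lemma aux_telescope (a : ℕ → ℝ) (d : ℕ)
    (hp : (setOf fun n => 1 ≤ n ∧ HasLeadingDigit (a n) d).Infinite) (N : ℕ) :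
    ∑ i ∈ Finset.Icc 1 N, (waitingTime a d i : ℝ) =
      (Nat.nth (fun n => 1 ≤ n ∧ HasLeadingDigit (a n) d) N : ℝ) -
        Nat.nth (fun n => 1 ≤ n ∧ HasLeadingDigit (a n) d) 0 := by
  set p := fun n => 1 ≤ n ∧ HasLeadingDigit (a n) d with hpdef
  induction N with
  | zero => simp
  | succ N ih =>
    rw [Finset.sum_Icc_succ_top (by omega : 1 ≤ N + 1), ih]
    have hmono : Nat.nth p N ≤ Nat.nth p (N + 1) := Nat.nth_monotone hp (Nat.le_succ N)
    have : (waitingTime a d (N + 1) : ℝ) = (Nat.nth p (N + 1) : ℝ) - Nat.nth p N := by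
      rw [waitingTime]
      simp only [Nat.add_sub_cancel]
      rw [← hpdef]
      push_cast [Nat.cast_sub hmono]
      ring
    rw [this]; ring

/-- A sequence (with each leading digit occurring infinitely often) is Benford
distributed if and only if the average waiting time for each digit `d` equals `1/P(d)`. -/
theorem benford_iff_average_waiting_time (a : ℕ → ℝ)
    (hpos : ∀ n : ℕ, 1 ≤ n → 0 < a n)
    (hinf : ∀ d : ℕ, 1 ≤ d → d ≤ 9 →
      {n : ℕ | 1 ≤ n ∧ HasLeadingDigit (a n) d}.Infinite) :
    BenfordDistributed a ↔
      ∀ d : ℕ, 1 ≤ d → d ≤ 9 →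
        Tendsto
          (fun N : ℕ => (∑ i ∈ Finset.Icc 1 N, (waitingTime a d i : ℝ)) / N)
          atTop (nhds (1 / benfordP d)) := by
  constructor
  · intro hB d hd1 hd9
    set p := fun n => 1 ≤ n ∧ HasLeadingDigit (a n) d with hpdef
    have hp : (setOf p).Infinite := hinf d hd1 hd9
    have hP := benfordP_pos hd1
    have h1 := hB d hd1 hd9
    have h1' : Tendsto (fun N : ℕ => (Nat.count p (N + 1) : ℝ) / N) atTop
        (nhds (benfordP d)) := by
      refine h1.congr (fun N => ?_)
      rw [aux_card_eq_count (fun n => HasLeadingDigit (a n) d) N]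
    have h2 : Tendsto (fun N : ℕ => (Nat.count p N : ℝ) / N) atTop (nhds (benfordP d)) :=
      (aux_shift_iff (fun N => (Nat.count p N : ℝ)) (benfordP d)).1 h1'
    have h3 := aux_count_to_nth hp hP h2
    have h4 := tendsto_const_div_atTop_nhds_zero_nat (Nat.nth p 0 : ℝ)
    have h5 := h3.sub h4
    rw [sub_zero] at h5
    refine h5.congr (fun N => ?_)
    rw [aux_telescope a d hp N, sub_div]
  · intro hw d hd1 hd9
    set p := fun n => 1 ≤ n ∧ HasLeadingDigit (a n) d with hpdef
    have hp : (setOf p).Infinite := hinf d hd1 hd9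
    have hP := benfordP_pos hd1
    have h1 := hw d hd1 hd9
    have h4 := tendsto_const_div_atTop_nhds_zero_nat (Nat.nth p 0 : ℝ)
    have h5 := h1.add h4
    rw [add_zero] at h5
    have h3 : Tendsto (fun N : ℕ => (Nat.nth p N : ℝ) / N) atTop
        (nhds (1 / benfordP d)) := by
      refine h5.congr (fun N => ?_)
      rw [aux_telescope a d hp N, sub_div]
      ring
    have h2 := aux_nth_to_count hp hP h3
    have h1' := (aux_shift_iff (fun N => (Nat.count p N : ℝ)) (benfordP d)).2 h2
    refine h1'.congr (fun N => ?_)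
    rw [aux_card_eq_count (fun n => HasLeadingDigit (a n) d) N]
end

section
/- If a sequence {a_n} of positive real numbers is locally Benford distributed of order k, then it is locally Benford distributed of every order k' with 1 ≤ k' ≤ k. -/
open Filter

lemma hld_exists {x : ℝ} (hx : 0 < x) :
    ∃ d : ℕ, 1 ≤ d ∧ d ≤ 9 ∧ HasLeadingDigit x d := by
  set j := Int.log 10 x with hj
  have h1 : ((10 : ℕ) : ℝ) ^ j ≤ x := Int.zpow_log_le_self (by norm_num) hx
  have h2 : x < ((10 : ℕ) : ℝ) ^ (j + 1) := Int.lt_zpow_succ_log_self (by norm_num) x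
  push_cast at h1 h2
  rw [zpow_add_one₀ (by norm_num : (10:ℝ) ≠ 0)] at h2
  have hp : (0 : ℝ) < (10 : ℝ) ^ j := zpow_pos (by norm_num) j
  have hy1 : (1 : ℝ) ≤ x / 10 ^ j := (le_div_iff₀ hp).2 (by linarith)
  have hy2 : x / 10 ^ j < 10 := by rw [div_lt_iff₀ hp]; linarith
  set D : ℤ := ⌊x / 10 ^ j⌋ with hD
  have hD1 : 1 ≤ D := Int.le_floor.2 (by exact_mod_cast hy1)
  have hD9 : D ≤ 9 := by
    have : D < 10 := Int.floor_lt.2 (by exact_mod_cast hy2)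
    omega
  have hcast : ((D.toNat : ℕ) : ℝ) = (D : ℝ) := by exact_mod_cast Int.toNat_of_nonneg (by omega)
  refine ⟨D.toNat, by omega, by omega, j, ?_, ?_⟩
  · have hfl : (D : ℝ) ≤ x / 10 ^ j := Int.floor_le _
    rw [hcast]
    calc (D : ℝ) * 10 ^ j ≤ (x / 10 ^ j) * 10 ^ j := by nlinarith
      _ = x := by field_simp
  · have hfl : x / 10 ^ j < D + 1 := Int.lt_floor_add_one _
    rw [hcast]
    calc x = (x / 10 ^ j) * 10 ^ j := by field_simp
      _ < ((D : ℝ) + 1) * 10 ^ j := by nlinarith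

lemma hld_unique {x : ℝ} {d e : ℕ} (hd1 : 1 ≤ d) (hd9 : d ≤ 9) (he1 : 1 ≤ e) (he9 : e ≤ 9)
    (hx : HasLeadingDigit x d) (hy : HasLeadingDigit x e) : d = e := by
  obtain ⟨j, hj1, hj2⟩ := hx
  obtain ⟨l, hl1, hl2⟩ := hy
  have hdr : (1 : ℝ) ≤ (d : ℝ) := by exact_mod_cast hd1
  have hdr9 : (d : ℝ) ≤ 9 := by exact_mod_cast hd9
  have her : (1 : ℝ) ≤ (e : ℝ) := by exact_mod_cast he1
  have her9 : (e : ℝ) ≤ 9 := by exact_mod_cast he9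
  have hpj : (0 : ℝ) < (10 : ℝ) ^ j := zpow_pos (by norm_num) j
  have hpl : (0 : ℝ) < (10 : ℝ) ^ l := zpow_pos (by norm_num) l
  have h10 : (1 : ℝ) < 10 := by norm_num
  have k1 : (10 : ℝ) ^ j ≤ x := le_trans (by nlinarith) hj1
  have k2 : x < (10 : ℝ) ^ (j + 1) := lt_of_lt_of_le hj2 (by
    rw [zpow_add_one₀ (by norm_num : (10:ℝ) ≠ 0)]; nlinarith)
  have k3 : (10 : ℝ) ^ l ≤ x := le_trans (by nlinarith) hl1
  have k4 : x < (10 : ℝ) ^ (l + 1) := lt_of_lt_of_le hl2 (by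
    rw [zpow_add_one₀ (by norm_num : (10:ℝ) ≠ 0)]; nlinarith)
  have hjl : j = l := by
    have a1 : j < l + 1 := (zpow_lt_zpow_iff_right₀ h10).1 (lt_of_le_of_lt k1 k4)
    have a2 : l < j + 1 := (zpow_lt_zpow_iff_right₀ h10).1 (lt_of_le_of_lt k3 k2)
    omega
  subst hjl
  have b1 : (d : ℝ) < (e : ℝ) + 1 := by nlinarith
  have b2 : (e : ℝ) < (d : ℝ) + 1 := by nlinarith
  have : d < e + 1 := by exact_mod_cast b1
  have : e < d + 1 := by exact_mod_cast b2
  omega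

lemma card_setOf (N : ℕ) (P : ℕ → Prop) [DecidablePred P] :
    Nat.card {n : ℕ | 1 ≤ n ∧ n ≤ N ∧ P n} = ((Finset.Icc 1 N).filter P).card := by
  have h : {n : ℕ | 1 ≤ n ∧ n ≤ N ∧ P n} = ↑((Finset.Icc 1 N).filter P) := by
    ext n
    simp [Finset.mem_Icc, and_assoc]
  rw [h, Nat.card_coe_set_eq, Set.ncard_coe_finset]

lemma sum_benfordP : ∑ e ∈ Finset.Icc (1:ℕ) 9, benfordP e = 1 := by
  simp only [benfordP]
  have hne : ∀ i ∈ Finset.Icc 1 9, ((1 : ℝ) + 1 / ((i : ℕ) : ℝ)) ≠ 0 := by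
    intro i hi
    simp only [Finset.mem_Icc] at hi
    have : (0:ℝ) < (i:ℝ) := by exact_mod_cast hi.1
    positivity
  have hprod : ∏ e ∈ Finset.Icc (1:ℕ) 9, ((1 : ℝ) + 1 / ((e : ℕ) : ℝ)) = 10 := by
    norm_num [Finset.prod_Icc_succ_top]
  have hlog := Real.log_prod (s := Finset.Icc (1:ℕ) 9) (f := fun e => (1 : ℝ) + 1 / ((e : ℕ) : ℝ)) hne
  rw [hprod] at hlog
  have hlog2 : Real.log 10 = ∑ i ∈ Finset.Icc (1:ℕ) 9, Real.log (1 + 1 / (i:ℝ)) := hlog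
  simp only [Real.logb, ← Finset.sum_div]
  rw [← hlog2, div_self (by norm_num : Real.log 10 ≠ 0)]

lemma lbd_step (a : ℕ → ℝ) (hpos : ∀ n : ℕ, 1 ≤ n → 0 < a n) (m : ℕ)
    (h : LocallyBenfordDistributed a (m + 1)) : LocallyBenfordDistributed a m := by
  classical
  intro d hd
  -- limit of the sum over the last digit
  have hsum : Tendsto (fun N : ℕ => ∑ e ∈ Finset.Icc (1:ℕ) 9,
      (Nat.card {n : ℕ | 1 ≤ n ∧ n ≤ N ∧
        ∀ i : Fin (m+1), HasLeadingDigit (a (n + (i:ℕ)))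
          ((Fin.snoc d e : Fin (m+1) → ℕ) i)} : ℝ) / N)
      atTop (nhds (∑ e ∈ Finset.Icc (1:ℕ) 9, (∏ i : Fin m, benfordP (d i)) * benfordP e)) := by
    apply tendsto_finset_sum
    intro e he
    simp only [Finset.mem_Icc] at he
    have hde : ∀ i : Fin (m+1), 1 ≤ (Fin.snoc d e : Fin (m+1) → ℕ) i ∧ (Fin.snoc d e : Fin (m+1) → ℕ) i ≤ 9 := by
      intro i
      induction i using Fin.lastCases with
      | last => simpa using he
      | cast i => simpa using hd i
    have hlim := h ((Fin.snoc d e : Fin (m+1) → ℕ)) hde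
    have hprod : ∏ i : Fin (m+1), benfordP ((Fin.snoc d e : Fin (m+1) → ℕ) i)
        = (∏ i : Fin m, benfordP (d i)) * benfordP e := by
      rw [Fin.prod_univ_castSucc]
      simp
    rwa [hprod] at hlim
  -- identify the cards
  have hcard : ∀ N : ℕ,
      (Nat.card {n : ℕ | 1 ≤ n ∧ n ≤ N ∧
          ∀ i : Fin m, HasLeadingDigit (a (n + (i:ℕ))) (d i)} : ℝ)
        = ∑ e ∈ Finset.Icc (1:ℕ) 9,
          (Nat.card {n : ℕ | 1 ≤ n ∧ n ≤ N ∧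
            ∀ i : Fin (m+1), HasLeadingDigit (a (n + (i:ℕ))) ((Fin.snoc d e : Fin (m+1) → ℕ) i)} : ℝ) := by
    intro N
    rw [card_setOf N (fun n => ∀ i : Fin m, HasLeadingDigit (a (n + (i:ℕ))) (d i))]
    rw [Finset.sum_congr rfl (fun e _ => by
      rw [card_setOf N (fun n => ∀ i : Fin (m+1),
        HasLeadingDigit (a (n + (i:ℕ))) ((Fin.snoc d e : Fin (m+1) → ℕ) i))])]
    rw [← Nat.cast_sum]
    congr 1
    have hU : (Finset.Icc 1 N).filter
          (fun n => ∀ i : Fin m, HasLeadingDigit (a (n + (i:ℕ))) (d i))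
        = (Finset.Icc (1:ℕ) 9).biUnion (fun e => (Finset.Icc 1 N).filter
          (fun n => ∀ i : Fin (m+1), HasLeadingDigit (a (n + (i:ℕ))) ((Fin.snoc d e : Fin (m+1) → ℕ) i))) := by
      ext n
      simp only [Finset.mem_filter, Finset.mem_biUnion, Finset.mem_Icc]
      constructor
      · rintro ⟨⟨hn1, hnN⟩, hQ⟩
        obtain ⟨e, he1, he9, hhe⟩ := hld_exists (hpos (n + m) (by omega))
        refine ⟨e, ⟨he1, he9⟩, ⟨hn1, hnN⟩, fun i => ?_⟩
        induction i using Fin.lastCases with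
        | last => simpa using hhe
        | cast i => simpa using hQ i
      · rintro ⟨e, _, hn, hQe⟩
        refine ⟨hn, fun i => ?_⟩
        have := hQe i.castSucc
        simpa using this
    rw [hU, Finset.card_biUnion]
    intro e he e' he' hee
    simp only [Finset.mem_coe, Finset.mem_Icc] at he he'
    rw [Function.onFun, Finset.disjoint_left]
    intro n hn hn'
    simp only [Finset.mem_filter] at hn hn'
    exact hee (hld_unique he.1 he.2 he'.1 he'.2
      (by simpa using hn.2 (Fin.last m)) (by simpa using hn'.2 (Fin.last m)))
  have hmain : Tendsto (fun N : ℕ =>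
      (Nat.card {n : ℕ | 1 ≤ n ∧ n ≤ N ∧
          ∀ i : Fin m, HasLeadingDigit (a (n + (i:ℕ))) (d i)} : ℝ) / N)
      atTop (nhds (∑ e ∈ Finset.Icc (1:ℕ) 9, (∏ i : Fin m, benfordP (d i)) * benfordP e)) := by
    have heq : (fun N : ℕ =>
        (Nat.card {n : ℕ | 1 ≤ n ∧ n ≤ N ∧
            ∀ i : Fin m, HasLeadingDigit (a (n + (i:ℕ))) (d i)} : ℝ) / N)
        = fun N : ℕ => ∑ e ∈ Finset.Icc (1:ℕ) 9,
          (Nat.card {n : ℕ | 1 ≤ n ∧ n ≤ N ∧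
            ∀ i : Fin (m+1), HasLeadingDigit (a (n + (i:ℕ))) ((Fin.snoc d e : Fin (m+1) → ℕ) i)} : ℝ) / N := by
      funext N
      rw [hcard N, Finset.sum_div]
    rw [heq]
    exact hsum
  have hone : ∑ e ∈ Finset.Icc (1:ℕ) 9, (∏ i : Fin m, benfordP (d i)) * benfordP e
      = ∏ i : Fin m, benfordP (d i) := by
    rw [← Finset.mul_sum, sum_benfordP, mul_one]
  rwa [hone] at hmain


/-- Local Benford distribution of order `k` implies local Benford distribution of any
order `k'` with `1 ≤ k' ≤ k`. -/
theorem locallyBenford_of_le (a : ℕ → ℝ)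
    (hpos : ∀ n : ℕ, 1 ≤ n → 0 < a n)
    (k : ℕ) (h : LocallyBenfordDistributed a k) :
    ∀ k' : ℕ, 1 ≤ k' → k' ≤ k → LocallyBenfordDistributed a k' := by
  intro k' _ hle
  obtain ⟨j, rfl⟩ := Nat.exists_eq_add_of_le hle
  induction j with
  | zero => simpa using h
  | succ n ih => exact ih (lbd_step a hpos (k' + n) h) (by omega)
end

section
/- The sequence of primorial numbers {P_n}, defined by P_n = ∏_{k=1}^n p_k where p_k is the k-th prime, is not locally Benford distributed of order 2 (and hence not of any order k ≥ 2). -/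
set_option maxHeartbeats 1000000

open Filter

section PrimorialNotBenfordAux

lemma log_four_eq : Real.log 4 = 2 * Real.log 2 := by
  rw [show (4:ℝ) = 2^2 by norm_num, Real.log_pow]; push_cast; ring

lemma log_four_lt : Real.log 4 < 1.3863 := by
  rw [log_four_eq]; nlinarith [Real.log_two_lt_d9]

lemma log_four_gt : (1.3862:ℝ) < Real.log 4 := by
  rw [log_four_eq]; nlinarith [Real.log_two_gt_d9]

lemma log_ten_lt : Real.log 10 < 2.3105 := by
  have h : Real.log ((10:ℝ)^3) < Real.log ((2:ℝ)^10) :=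
    Real.log_lt_log (by positivity) (by norm_num)
  rw [Real.log_pow, Real.log_pow] at h
  push_cast at h
  nlinarith [Real.log_two_lt_d9]

lemma log_ten_gt : (2.2774:ℝ) < Real.log 10 := by
  have h : Real.log ((2:ℝ)^23) < Real.log ((10:ℝ)^7) :=
    Real.log_lt_log (by positivity) (by norm_num)
  rw [Real.log_pow, Real.log_pow] at h
  push_cast at h
  nlinarith [Real.log_two_gt_d9]

lemma hld_kill (x : ℝ) (p : ℕ) (m : ℕ)
    (h1 : 12 * 10 ^ m ≤ p) (h2 : p ≤ 8 * 10 ^ (m + 1))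
    (hx : HasLeadingDigit x 9) : ¬ HasLeadingDigit (x * p) 9 := by
  obtain ⟨j, hj1, hj2⟩ := hx
  rintro ⟨i, hi1, hi2⟩
  push_cast at hj1 hj2 hi1 hi2
  have hten : (10:ℝ) ≠ 0 := by norm_num
  have hp1 : (12:ℝ) * 10 ^ (m:ℤ) ≤ (p:ℝ) := by
    rw [zpow_natCast]; exact_mod_cast h1
  have hp2 : (p:ℝ) ≤ 80 * 10 ^ (m:ℤ) := by
    rw [zpow_natCast]
    calc (p:ℝ) ≤ ((8 * 10 ^ (m+1) : ℕ) : ℝ) := by exact_mod_cast h2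
    _ = 80 * 10 ^ m := by push_cast; ring
  set M : ℤ := (m:ℤ) with hM
  have h10j : (0:ℝ) < 10 ^ j := by positivity
  have h10M : (0:ℝ) < 10 ^ M := by positivity
  have hxpos : 0 < x := lt_of_lt_of_le (by positivity) hj1
  have hppos : (0:ℝ) < p := lt_of_lt_of_le (by positivity) hp1
  have e3 : (10:ℝ) ^ (j + M + 2) = 10 ^ j * 10 ^ M * 100 := by
    rw [zpow_add₀ hten, zpow_add₀ hten]; norm_num
  -- upper bound
  have u1 : x * p < (9+1) * 10 ^ j * p := mul_lt_mul_of_pos_right hj2 hppos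
  have u2 : (9+1) * 10 ^ j * (p:ℝ) ≤ (9+1) * 10 ^ j * (80 * 10 ^ M) :=
    mul_le_mul_of_nonneg_left hp2 (by positivity)
  have hilt : i < j + M + 2 := by
    have h9 : (9:ℝ) * 10 ^ i < 9 * 10 ^ (j + M + 2) := by
      rw [e3]; nlinarith
    have := (mul_lt_mul_iff_right₀ (by norm_num : (0:ℝ) < 9)).mp h9
    exact (zpow_lt_zpow_iff_right₀ (by norm_num : (1:ℝ) < 10)).mp this
  have hle : (10:ℝ) ^ (i + 1) ≤ 10 ^ (j + M + 2) :=
    zpow_le_zpow_right₀ (by norm_num) (by omega)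
  have e2 : (10:ℝ) ^ (i + 1) = 10 ^ i * 10 := by
    rw [zpow_add₀ hten]; norm_num
  have l1 : (9:ℝ) * 10 ^ j * (12 * 10 ^ M) ≤ x * p :=
    mul_le_mul hj1 hp1 (by positivity) (le_of_lt hxpos)
  nlinarith

lemma centralBinom_le (n : ℕ) (hn : 0 < n) :
    Nat.centralBinom n ≤ (2 * n) ^ (Nat.count Nat.Prime (2 * n + 1)) := by
  have h2n : 0 < 2 * n := by omega
  set c := Nat.centralBinom n with hc
  have hc0 : c ≠ 0 := (Nat.centralBinom_pos n).ne'
  have hfact : c.factorization.prod (· ^ ·) = c := Nat.factorization_prod_pow_eq_self hc0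
  have hsub : c.factorization.support ⊆ (Finset.range (2*n+1)).filter Nat.Prime := by
    intro p hp
    have hpp : p.Prime := Nat.prime_of_mem_primeFactors (by
      rwa [Nat.support_factorization] at hp)
    have hν : 1 ≤ c.factorization p := by
      have := Finsupp.mem_support_iff.mp hp
      omega
    have hple : p ≤ 2 * n := by
      calc p = p ^ 1 := (pow_one p).symm
      _ ≤ p ^ c.factorization p := Nat.pow_le_pow_right hpp.pos hν
      _ ≤ 2 * n := Nat.pow_factorization_choose_le h2n
    simp [Finset.mem_filter, Finset.mem_range, hpp]
    omega
  calc c = c.factorization.prod (· ^ ·) := hfact.symm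
  _ = ∏ p ∈ c.factorization.support, p ^ c.factorization p := rfl
  _ ≤ ∏ _p ∈ c.factorization.support, (2*n) := by
      apply Finset.prod_le_prod
      · intros; positivity
      · intro p hp
        exact Nat.pow_factorization_choose_le h2n
  _ = (2*n) ^ c.factorization.support.card := by rw [Finset.prod_const]
  _ ≤ (2*n) ^ (Nat.count Nat.Prime (2*n+1)) := by
      apply Nat.pow_le_pow_right h2n
      calc c.factorization.support.card ≤ ((Finset.range (2*n+1)).filter Nat.Prime).card :=
        Finset.card_le_card hsub
      _ = Nat.count Nat.Prime (2*n+1) := (Nat.count_eq_card_filter_range _ _).symm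

lemma cheb_lower (n : ℕ) (hn : 0 < n) :
    (n : ℝ) * Real.log 4 ≤ ((Nat.count Nat.Prime (2*n+1) : ℝ) + 1) * Real.log (2*n) := by
  have key : (4:ℕ) ^ n ≤ (2*n) ^ (Nat.count Nat.Prime (2*n+1) + 1) := by
    calc (4:ℕ) ^ n ≤ 2 * n * Nat.centralBinom n :=
      Nat.four_pow_le_two_mul_self_mul_centralBinom n hn
    _ ≤ 2 * n * (2*n) ^ (Nat.count Nat.Prime (2*n+1)) :=
      Nat.mul_le_mul_left _ (centralBinom_le n hn)
    _ = (2*n) ^ (Nat.count Nat.Prime (2*n+1) + 1) := by rw [pow_succ]; ring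
  have keyR : ((4:ℝ)) ^ n ≤ ((2*n:ℕ):ℝ) ^ (Nat.count Nat.Prime (2*n+1) + 1) := by
    exact_mod_cast key
  have h1 : Real.log ((4:ℝ)^n) ≤ Real.log (((2*n:ℕ):ℝ) ^ (Nat.count Nat.Prime (2*n+1) + 1)) :=
    Real.log_le_log (by positivity) keyR
  rw [Real.log_pow, Real.log_pow] at h1
  have : ((2*n:ℕ):ℝ) = (2*n:ℝ) := by push_cast; ring
  rw [this] at h1
  push_cast at h1 ⊢
  linarith

lemma cheb_upper (y : ℕ) (hy : 2 ≤ y) :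
    (Nat.count Nat.Prime y : ℝ) ≤ (Nat.sqrt y + 1 : ℕ) + 2 * Real.log 4 * y / Real.log y := by
  set q := Nat.sqrt y with hq
  have hqy : q + 1 ≤ y := Nat.sqrt_lt_self (by omega)
  set T := (Finset.Ico (q+1) y).filter Nat.Prime with hT
  have hsplit : Nat.count Nat.Prime y ≤ (q + 1) + T.card := by
    have hsub : (Finset.range y).filter Nat.Prime ⊆
        ((Finset.range (q+1)).filter Nat.Prime) ∪ T := by
      intro p hp
      simp only [Finset.mem_filter, Finset.mem_range, Finset.mem_union, Finset.mem_Ico, hT] at hp ⊢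
      rcases lt_or_ge p (q+1) with h | h
      · exact Or.inl ⟨h, hp.2⟩
      · exact Or.inr ⟨⟨h, hp.1⟩, hp.2⟩
    have h1 : Nat.count Nat.Prime y ≤ ((Finset.range (q+1)).filter Nat.Prime).card + T.card := by
      rw [Nat.count_eq_card_filter_range]
      exact le_trans (Finset.card_le_card hsub) (Finset.card_union_le _ _)
    have h2 : ((Finset.range (q+1)).filter Nat.Prime).card ≤ q + 1 := by
      exact le_trans (Finset.card_filter_le _ _) (by simp)
    omega
  have hprod : (q+1) ^ T.card ≤ 4 ^ y := by
    have hry : y - 1 + 1 = y := by omega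
    calc (q+1) ^ T.card ≤ ∏ p ∈ T, p := by
          apply Finset.pow_card_le_prod
          intro p hp
          simp only [hT, Finset.mem_filter, Finset.mem_Ico] at hp
          exact hp.1.1
    _ ≤ ∏ p ∈ (Finset.range y).filter Nat.Prime, p := by
          apply Finset.prod_le_prod_of_subset_of_one_le'
          · intro p hp
            simp only [hT, Finset.mem_filter, Finset.mem_Ico, Finset.mem_range] at hp ⊢
            exact ⟨hp.1.2, hp.2⟩
          · intro p hp _
            exact Nat.one_le_iff_ne_zero.mpr (Nat.Prime.ne_zero (Finset.mem_filter.mp hp).2)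
    _ = primorial (y - 1) := by rw [primorial, hry]
    _ ≤ 4 ^ (y - 1) := primorial_le_4_pow _
    _ ≤ 4 ^ y := Nat.pow_le_pow_right (by norm_num) (by omega)
  have hq1 : 2 ≤ q + 1 := by
    have h4 : 0 < q := Nat.sqrt_pos.mpr (by omega)
    omega
  have hlogq : Real.log y < 2 * Real.log ((q:ℝ)+1) := by
    have hyq : (y:ℝ) < ((q:ℝ)+1)^2 := by
      have h5 : y < (q+1) * (q+1) := Nat.lt_succ_sqrt y
      have h6 : ((y:ℝ)) < ((q:ℝ)+1) * ((q:ℝ)+1) := by exact_mod_cast h5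
      nlinarith
    calc Real.log y < Real.log (((q:ℝ)+1)^2) :=
      Real.log_lt_log (by positivity) hyq
    _ = 2 * Real.log ((q:ℝ)+1) := by rw [Real.log_pow]; push_cast; ring
  have hlogq_pos : 0 < Real.log ((q:ℝ)+1) := by
    apply Real.log_pos; exact_mod_cast hq1
  have hlogy_pos : 0 < Real.log y := Real.log_pos (by exact_mod_cast hy)
  have hcardT : (T.card : ℝ) * Real.log ((q:ℝ)+1) ≤ y * Real.log 4 := by
    have h' : Real.log ((((q+1):ℕ):ℝ) ^ T.card) ≤ Real.log ((4:ℝ) ^ y) := by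
      apply Real.log_le_log (by positivity)
      exact_mod_cast hprod
    rw [Real.log_pow, Real.log_pow] at h'
    push_cast at h'
    linarith
  have hTle : (T.card : ℝ) ≤ 2 * Real.log 4 * y / Real.log y := by
    rw [le_div_iff₀ hlogy_pos]
    have h1 : (T.card : ℝ) * Real.log y ≤ (T.card:ℝ) * (2 * Real.log ((q:ℝ)+1)) :=
      mul_le_mul_of_nonneg_left (le_of_lt hlogq) (by positivity)
    nlinarith
  have hfin : (Nat.count Nat.Prime y : ℝ) ≤ ((q+1:ℕ):ℝ) + T.card := by exact_mod_cast hsplit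
  push_cast at hfin ⊢
  linarith

lemma helper1 : ∀ m, 10 ≤ m → 48000 * m^2 ≤ 10^m := by
  intro m hm
  induction m with
  | zero => omega
  | succ n ih =>
    rcases Nat.lt_or_ge n 10 with h | h
    · interval_cases n <;> first | (exfalso; omega) | norm_num
    · have := ih (by omega)
      have h2 : 48000 * (n+1)^2 ≤ 10 * (48000 * n^2) := by nlinarith
      calc 48000 * (n+1)^2 ≤ 10 * (48000 * n^2) := h2
      _ ≤ 10 * 10^n := by omega
      _ = 10^(n+1) := by ring

lemma helper2 : ∀ m, 3 ≤ m → 200 * m ≤ 10^m := by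
  intro m hm
  induction m with
  | zero => omega
  | succ n ih =>
    rcases Nat.lt_or_ge n 3 with h | h
    · interval_cases n <;> first | (exfalso; omega) | norm_num
    · have := ih (by omega)
      have h2 : 200 * (n+1) ≤ 10 * (200 * n) := by nlinarith
      calc 200 * (n+1) ≤ 10 * (200 * n) := h2
      _ ≤ 10 * 10^n := by omega
      _ = 10^(n+1) := by ring

lemma boundA (m : ℕ) (hm : 10 ≤ m) :
    (Nat.count Nat.Prime (12 * 10^(m-1)) : ℝ) ≤ 1.48 * 10^m / m := by
  set y : ℕ := 12 * 10^(m-1) with hy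
  have hy2 : 2 ≤ y := by
    have : 1 ≤ 10^(m-1) := Nat.one_le_pow _ _ (by norm_num)
    omega
  have hcount := cheb_upper y hy2
  set X : ℝ := (10:ℝ)^m with hX
  have hXpos : (0:ℝ) < X := by positivity
  have hmpos : (0:ℝ) < m := by exact_mod_cast (by omega : 0 < m)
  have h1 : m - 1 + 1 = m := by omega
  have hXe : X = (10:ℝ)^(m-1) * 10 := by rw [hX, ← pow_succ, h1]
  have hyR : (y:ℝ) = 1.2 * X := by
    rw [hy, hXe]; push_cast; ring
  -- sqrt term
  set S : ℕ := Nat.sqrt y + 1 with hS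
  have hSsq : (S:ℝ)^2 ≤ 4.8 * X := by
    have hs1 : 1 ≤ Nat.sqrt y := Nat.sqrt_pos.mpr (by omega)
    have hs2 : Nat.sqrt y * Nat.sqrt y ≤ y := Nat.sqrt_le y
    have : S^2 ≤ 4 * y := by
      have : S^2 = Nat.sqrt y * Nat.sqrt y + 2 * Nat.sqrt y + 1 := by rw [hS]; ring
      nlinarith
    have hcast : ((S:ℝ))^2 ≤ 4 * (y:ℝ) := by exact_mod_cast this
    rw [hyR] at hcast
    linarith
  have hSm : (S:ℝ) * m ≤ 0.01 * X := by
    have h48 : (48000:ℝ) * (m:ℝ)^2 ≤ X := by rw [hX]; exact_mod_cast helper1 m hm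
    have hSpos : (0:ℝ) ≤ S := by positivity
    nlinarith [sq_nonneg ((S:ℝ)*m - 0.01*X), sq_nonneg ((S:ℝ)*m + 0.01*X), hSsq, h48, hXpos, hmpos]
  -- log term
  have hlogy_ge : (m:ℝ) * Real.log 10 ≤ Real.log y := by
    have h10m : (10:ℝ)^m ≤ (y:ℝ) := by rw [hyR]; nlinarith
    calc (m:ℝ) * Real.log 10 = Real.log ((10:ℝ)^m) := by rw [Real.log_pow]
    _ ≤ Real.log y := Real.log_le_log (by positivity) h10m
  have hlogy_pos : 0 < Real.log (y:ℝ) := by nlinarith [log_ten_gt]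
  have hlog4_pos : (0:ℝ) < Real.log 4 := by nlinarith [log_four_gt]
  -- main term bound: 2*log4*y/log y ≤ 1.47 X / m
  have hmain : 2 * Real.log 4 * (y:ℝ) / Real.log y ≤ 1.47 * X / m := by
    rw [div_le_div_iff₀ hlogy_pos hmpos]
    have e1 : 2 * Real.log 4 * (y:ℝ) * m = 2.4 * Real.log 4 * X * m := by rw [hyR]; ring
    rw [e1]
    have h2 : 2.4 * Real.log 4 * (m:ℝ) ≤ 1.47 * Real.log y := by
      nlinarith [log_four_lt, log_ten_gt, hlogy_ge, hmpos]
    nlinarith [hXpos]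
  -- combine
  rw [le_div_iff₀ hmpos]
  have hc2 : (Nat.count Nat.Prime y : ℝ) * m ≤ ((S:ℝ) + 2 * Real.log 4 * (y:ℝ) / Real.log y) * m :=
    mul_le_mul_of_nonneg_right hcount hmpos.le
  have hm2 : (2 * Real.log 4 * (y:ℝ) / Real.log y) * m ≤ 1.47 * X := by
    have := mul_le_mul_of_nonneg_right hmain (le_of_lt hmpos)
    calc (2 * Real.log 4 * (y:ℝ) / Real.log y) * m ≤ (1.47 * X / m) * m := this
    _ = 1.47 * X := by field_simp
  nlinarith [hc2, hm2, hSm]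

lemma boundB (m : ℕ) (hm : 100 ≤ m) :
    2.37 * 10^m / m ≤ (Nat.count Nat.Prime (8 * 10^m + 1) : ℝ) := by
  have h := cheb_lower (4 * 10^m) (by positivity)
  have hBeq : 2 * (4 * 10^m) + 1 = 8 * 10^m + 1 := by ring
  rw [hBeq] at h
  set B : ℕ := Nat.count Nat.Prime (8 * 10^m + 1) with hB
  set X : ℝ := (10:ℝ)^m with hX
  have hXpos : (0:ℝ) < X := by positivity
  have hmpos : (0:ℝ) < m := by exact_mod_cast (by omega : 0 < m)
  have hnR : ((4 * 10^m : ℕ):ℝ) = 4 * X := by push_cast; rw [hX]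
  rw [hnR] at h
  -- h : 4 * X * log 4 ≤ (B+1) * log (2 * (4 * X))
  have hlog2n : Real.log (2 * (4 * X)) ≤ 2.3337 * m := by
    have h1 : (2:ℝ) * (4 * X) ≤ (10:ℝ)^(m+1) := by rw [hX, pow_succ]; nlinarith
    have h2 : Real.log (2 * (4 * X)) ≤ (m+1) * Real.log 10 := by
      calc Real.log (2 * (4 * X)) ≤ Real.log ((10:ℝ)^(m+1)) :=
        Real.log_le_log (by positivity) h1
      _ = (m+1) * Real.log 10 := by rw [Real.log_pow]; push_cast; ring
    have hm' : (100:ℝ) ≤ m := by exact_mod_cast hm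
    nlinarith [log_ten_lt, log_ten_gt]
  have hfin : 4 * X * Real.log 4 ≤ ((B:ℝ)+1) * (2.3337 * m) := by
    calc 4 * X * Real.log 4 ≤ ((B:ℝ)+1) * Real.log (2 * (4 * X)) := h
    _ ≤ ((B:ℝ)+1) * (2.3337 * m) := mul_le_mul_of_nonneg_left hlog2n (by positivity)
  have h200 : (200:ℝ) * m ≤ X := by rw [hX]; exact_mod_cast helper2 m (by omega)
  rw [div_le_iff₀ hmpos]
  nlinarith [hfin, log_four_gt, hXpos, hmpos]

lemma count_prime_tendsto : Tendsto (fun y => Nat.count Nat.Prime y) atTop atTop := by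
  apply Monotone.tendsto_atTop_atTop (Nat.count_monotone _)
  intro b
  refine ⟨Nat.nth Nat.Prime b + 1, ?_⟩
  have h1 : Nat.count Nat.Prime (Nat.nth Nat.Prime b + 1) = b + 1 := by
    rw [Nat.count_succ, if_pos (Nat.nth_mem_of_infinite Nat.infinite_setOf_prime b),
        Nat.count_nth_of_infinite Nat.infinite_setOf_prime]
  omega

lemma argA_tendsto : Tendsto (fun m : ℕ => 12 * 10^(m-1)) atTop atTop := by
  apply tendsto_atTop_mono _ tendsto_id
  intro m
  have := Nat.lt_pow_self (n := m-1) (show 1 < 10 by norm_num)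
  simp only [id]
  omega

lemma argB_tendsto : Tendsto (fun m : ℕ => 8 * 10^m + 1) atTop atTop := by
  apply tendsto_atTop_mono _ tendsto_id
  intro m
  have := Nat.lt_pow_self (n := m) (show 1 < 10 by norm_num)
  simp only [id]
  omega

lemma count5 : Nat.count Nat.Prime 5 = 2 := by
  norm_num [Nat.count_succ]

end PrimorialNotBenfordAux

/-- The primorial numbers `P_n = ∏_{j=1}^n p_j` are not locally Benford distributed of
order 2, and hence not of any order `k ≥ 2`. -/
theorem primorial_not_locallyBenford :
    ∀ k : ℕ, 2 ≤ k →
      ¬ LocallyBenfordDistributed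
        (fun n : ℕ => ((∏ j ∈ Finset.Icc 1 n, nthPrime j : ℕ) : ℝ)) k := by
  intro k hk h
  set a : ℕ → ℝ := fun n : ℕ => ((∏ j ∈ Finset.Icc 1 n, nthPrime j : ℕ) : ℝ) with ha
  have h9 := h (fun _ => 9) (fun i => ⟨by norm_num, by norm_num⟩)
  set c : ℝ := ∏ _i : Fin k, benfordP 9 with hcdef
  have hc : 0 < c := by
    rw [hcdef]
    apply Finset.prod_pos
    intro i _
    exact Real.logb_pos (by norm_num) (by norm_num)
  -- the counting sets
  set S : ℕ → Set ℕ := fun N => {n : ℕ | 1 ≤ n ∧ n ≤ N ∧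
      ∀ i : Fin k, HasLeadingDigit (a (n + (i : ℕ))) 9} with hS
  have h9' : Tendsto (fun N : ℕ => (Nat.card (S N) : ℝ) / N) atTop (nhds c) := h9
  -- window endpoints
  set A : ℕ → ℕ := fun m => Nat.count Nat.Prime (12 * 10^(m-1)) with hA
  set B : ℕ → ℕ := fun m => Nat.count Nat.Prime (8 * 10^m + 1) with hB
  -- product recursion
  have hsplit : ∀ n : ℕ, a (n+1) = a n * (Nat.nth Nat.Prime n : ℝ) := by
    intro n
    rw [ha]
    simp only
    have hnp : nthPrime (n+1) = Nat.nth Nat.Prime n := by simp [nthPrime]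
    rw [Finset.prod_Icc_succ_top (by omega : 1 ≤ n + 1), hnp]
    push_cast
    ring
  -- kill
  have hQfail : ∀ m : ℕ, 1 ≤ m → ∀ n : ℕ, 1 ≤ n → A m ≤ n → n < B m →
      ¬ (∀ i : Fin k, HasLeadingDigit (a (n + (i : ℕ))) 9) := by
    intro m hm n hn h1 h2 hQ
    have h0' : HasLeadingDigit (a n) 9 := by
      have := hQ ⟨0, by omega⟩
      simpa using this
    have h1' : HasLeadingDigit (a (n+1)) 9 := by
      have := hQ ⟨1, by omega⟩
      simpa using this
    have hinf := Nat.infinite_setOf_prime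
    simp only [hA] at h1
    simp only [hB] at h2
    have hp1 : 12 * 10^(m-1) ≤ Nat.nth Nat.Prime n :=
      (Nat.count_le_iff_le_nth hinf).mp h1
    have hp2 : Nat.nth Nat.Prime n < 8 * 10^m + 1 :=
      (Nat.lt_nth_iff_count_lt hinf).mp h2
    have hm1 : m - 1 + 1 = m := by omega
    have hkill := hld_kill (a n) (Nat.nth Nat.Prime n) (m-1) hp1
      (by rw [hm1]; omega) h0'
    rw [hsplit n] at h1'
    exact hkill h1'
  -- A, B ≥ 2 and A ≤ B
  have hA2 : ∀ m : ℕ, 1 ≤ m → 2 ≤ A m := by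
    intro m hm
    rw [hA, ← count5]
    apply Nat.count_monotone
    have : 1 ≤ 10^(m-1) := Nat.one_le_pow _ _ (by norm_num)
    omega
  have hB2 : ∀ m : ℕ, 1 ≤ m → 2 ≤ B m := by
    intro m hm
    rw [hB, ← count5]
    apply Nat.count_monotone
    have : 1 ≤ 10^m := Nat.one_le_pow _ _ (by norm_num)
    omega
  have hAB : ∀ m : ℕ, 1 ≤ m → A m ≤ B m := by
    intro m hm
    rw [hA, hB]
    apply Nat.count_monotone
    have h1 : 10^m = 10^(m-1) * 10 := by
      rw [← pow_succ, Nat.sub_add_cancel hm]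
    have : 1 ≤ 10^(m-1) := Nat.one_le_pow _ _ (by norm_num)
    omega
  -- card equality on windows
  have hcardEq : ∀ m : ℕ, 1 ≤ m → Nat.card (S (B m - 1)) = Nat.card (S (A m - 1)) := by
    intro m hm
    have hA1 := hA2 m hm
    have hB1 := hB2 m hm
    have hsets : S (B m - 1) = S (A m - 1) := by
      apply Set.ext
      intro n
      rw [hS]
      simp only [Set.mem_setOf_eq]
      constructor
      · rintro ⟨hn1, hn2, hn3⟩
        refine ⟨hn1, ?_, hn3⟩
        by_contra hlt
        push_neg at hlt
        exact hQfail m hm n hn1 (by omega) (by omega) hn3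
      · rintro ⟨hn1, hn2, hn3⟩
        exact ⟨hn1, by have := hAB m hm; omega, hn3⟩
    rw [hsets]
  -- tendsto along windows
  have hAinf : Tendsto (fun m : ℕ => A m - 1) atTop atTop :=
    (tendsto_sub_atTop_nat 1).comp (count_prime_tendsto.comp argA_tendsto)
  have hBinf : Tendsto (fun m : ℕ => B m - 1) atTop atTop :=
    (tendsto_sub_atTop_nat 1).comp (count_prime_tendsto.comp argB_tendsto)
  have hT1 : Tendsto (fun m : ℕ => (Nat.card (S (A m - 1)) : ℝ) / (A m - 1 : ℕ)) atTop (nhds c) :=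
    h9'.comp hAinf
  have hT2 : Tendsto (fun m : ℕ => (Nat.card (S (B m - 1)) : ℝ) / (B m - 1 : ℕ)) atTop (nhds c) :=
    h9'.comp hBinf
  have hE1 : ∀ᶠ m : ℕ in atTop, (Nat.card (S (A m - 1)) : ℝ) / ((A m - 1 : ℕ) : ℝ) < c + c/10 :=
    hT1.eventually_lt_const (by linarith)
  have hE2 : ∀ᶠ m : ℕ in atTop, c - c/10 < (Nat.card (S (B m - 1)) : ℝ) / ((B m - 1 : ℕ) : ℝ) :=
    hT2.eventually_const_lt (by linarith)
  have hfinal : ∀ᶠ m : ℕ in atTop, False := by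
    filter_upwards [hE1, hE2, eventually_ge_atTop 100] with m he1 he2 hm100
    have hm1 : 1 ≤ m := by omega
    have bA := boundA m (by omega)
    have bB := boundB m hm100
    have hA1 := hA2 m hm1
    have hB1 := hB2 m hm1
    set u : ℝ := (A m : ℝ) with hu
    set v : ℝ := (B m : ℝ) with hv
    have hu2 : (2:ℝ) ≤ u := by rw [hu]; exact_mod_cast hA1
    have hv2 : (2:ℝ) ≤ v := by rw [hv]; exact_mod_cast hB1
    have hN1cast : ((A m - 1 : ℕ) : ℝ) = u - 1 := by
      rw [hu]; push_cast [Nat.cast_sub (by omega : 1 ≤ A m)]; ring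
    have hN2cast : ((B m - 1 : ℕ) : ℝ) = v - 1 := by
      rw [hv]; push_cast [Nat.cast_sub (by omega : 1 ≤ B m)]; ring
    have hN1pos : (0:ℝ) < u - 1 := by linarith
    have hN2pos : (0:ℝ) < v - 1 := by linarith
    rw [hN1cast] at he1
    rw [hN2cast] at he2
    rw [div_lt_iff₀ hN1pos] at he1
    rw [lt_div_iff₀ hN2pos] at he2
    rw [hcardEq m hm1] at he2
    -- numeric window bound
    set W : ℝ := (10:ℝ)^m / m with hW
    have hWpos : 0 < W := by
      rw [hW]; positivity
    have hbA' : u ≤ 1.48 * W := by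
      rw [hu, hW]; simp only [hA]; rw [← mul_div_assoc]; exact bA
    have hbB' : 2.37 * W ≤ v := by
      rw [hv, hW]; simp only [hB]; rw [← mul_div_assoc]; exact bB
    have key : (c - c/10) * (v - 1) < (c + c/10) * (u - 1) := lt_trans he2 he1
    have h3 : (c + c/10) * (u - 1) ≤ (c + c/10) * (1.48 * W - 1) :=
      mul_le_mul_of_nonneg_left (by linarith) (by linarith)
    have h4 : (c - c/10) * (2.37 * W - 1) ≤ (c - c/10) * (v - 1) :=
      mul_le_mul_of_nonneg_left (by linarith) (by linarith)
    nlinarith [mul_pos hc hWpos]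
  exact hfinal.exists.choose_spec
end

section
/- Let {u_n} be a sequence of real numbers satisfying u_n → ∞ as n → ∞ and u_{n+1} = u_n + O(1/n) as n → ∞. For each sufficiently large positive integer k, let n_k denote the smallest integer n with u_n ≥ k + 1/2. Then for every ε > 0 there exists δ > 0 such that, for all sufficiently large k, |u_n - k - 1/2| ≤ ε holds for every n with n_k ≤ n < (1+δ)·n_k. -/
open Filter

lemma near_half_aux (u : ℕ → ℝ) (C : ℝ) (hCpos : 0 < C)
    (hC : ∀ m : ℕ, 1 ≤ m → |u (m + 1) - u m| ≤ C / m)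
    (nk : ℕ) (h1 : 1 ≤ nk) :
    ∀ n : ℕ, nk ≤ n → |u n - u nk| ≤ ((n : ℝ) - nk) * C / nk := by
  intro n hn
  induction n, hn using Nat.le_induction with
  | base => simp
  | succ n hn ih =>
    have hnk0 : (0 : ℝ) < nk := by exact_mod_cast h1
    have hn1 : 1 ≤ n := le_trans h1 hn
    have h2 : |u (n + 1) - u n| ≤ C / n := hC n hn1
    have h3 : C / (n : ℝ) ≤ C / nk := by
      apply div_le_div_of_nonneg_left hCpos.le hnk0
      exact_mod_cast hn
    calc |u (n + 1) - u nk| ≤ |u (n + 1) - u n| + |u n - u nk| := by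
          have := abs_add_le (u (n + 1) - u n) (u n - u nk)
          simpa using this
      _ ≤ C / nk + ((n : ℝ) - nk) * C / nk := by
          exact add_le_add (le_trans h2 h3) ih
      _ = ((n : ℝ) + 1 - nk) * C / nk := by ring
      _ = (((n + 1 : ℕ) : ℝ) - nk) * C / nk := by push_cast; ring

/-- If `u_n → ∞` and `u_{n+1} = u_n + O(1/n)`, and `n_k` is the least `n` with
`u_n ≥ k + 1/2`, then for every `ε > 0` there is `δ > 0` such that for all large `k`,
`|u_n - k - 1/2| ≤ ε` for all `n` with `n_k ≤ n < (1+δ) n_k`. -/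
theorem near_half_integer_on_interval (u : ℕ → ℝ)
    (hgrow : Tendsto u atTop atTop)
    (hreg : ∃ C : ℝ, 0 < C ∧ ∀ n : ℕ, 1 ≤ n → |u (n + 1) - u n| ≤ C / n) :
    ∀ ε : ℝ, 0 < ε → ∃ δ : ℝ, 0 < δ ∧ ∃ K : ℕ, ∀ k : ℕ, K ≤ k →
      ∀ nk : ℕ, ((k : ℝ) + 1 / 2 ≤ u nk ∧ ∀ m : ℕ, m < nk → u m < (k : ℝ) + 1 / 2) →
        ∀ n : ℕ, nk ≤ n → (n : ℝ) < (1 + δ) * (nk : ℝ) →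
          |u n - (k : ℝ) - 1 / 2| ≤ ε := by
  obtain ⟨C, hCpos, hC⟩ := hreg
  intro ε hε
  refine ⟨ε / (2 * C), by positivity, ?_⟩
  set N0 : ℕ := ⌈2 * C / ε⌉₊ + 2 with hN0
  have hN0ge : 2 ≤ N0 := by omega
  have hne : (Finset.range N0).Nonempty := Finset.nonempty_range_iff.mpr (by omega)
  set M : ℝ := (Finset.range N0).sup' hne u with hM
  refine ⟨⌈M⌉₊ + 1, ?_⟩
  intro k hk nk ⟨hge, hmin⟩ n hn hlt
  have hkM : M < (k : ℝ) + 1 / 2 := by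
    have h1 : M ≤ (⌈M⌉₊ : ℝ) := Nat.le_ceil M
    have h2 : ((⌈M⌉₊ + 1 : ℕ) : ℝ) ≤ k := by exact_mod_cast hk
    push_cast at h2
    linarith
  -- nk ≥ N0
  have hnkN0 : N0 ≤ nk := by
    by_contra h
    push_neg at h
    have : u nk ≤ M := Finset.le_sup' u (by simpa using h)
    linarith
  have h1nk : 1 ≤ nk := by omega
  have hnk0 : (0 : ℝ) < nk := by exact_mod_cast h1nk
  -- u nk close to k + 1/2
  have hm1 : 1 ≤ nk - 1 := by omega
  have hmeq : (nk - 1) + 1 = nk := by omega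
  have hstep : |u nk - u (nk - 1)| ≤ C / (nk - 1 : ℕ) := by
    have := hC (nk - 1) hm1
    rwa [hmeq] at this
  have hceil : 2 * C / ε ≤ ((nk - 1 : ℕ) : ℝ) := by
    have h1 : 2 * C / ε ≤ (⌈2 * C / ε⌉₊ : ℝ) := Nat.le_ceil _
    have h2 : (⌈2 * C / ε⌉₊ : ℝ) ≤ ((nk - 1 : ℕ) : ℝ) := by
      have : ⌈2 * C / ε⌉₊ ≤ nk - 1 := by omega
      exact_mod_cast this
    linarith
  have hm0 : (0 : ℝ) < ((nk - 1 : ℕ) : ℝ) := by exact_mod_cast hm1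
  have hCm : C / ((nk - 1 : ℕ) : ℝ) ≤ ε / 2 := by
    rw [div_le_div_iff₀ hm0 (by norm_num : (0:ℝ) < 2)]
    have := (div_le_iff₀ hε).mp hceil
    linarith
  have hunk_lt : u nk < (k : ℝ) + 1 / 2 + ε / 2 := by
    have hprev : u (nk - 1) < (k : ℝ) + 1 / 2 := hmin _ (by omega)
    have : u nk - u (nk - 1) ≤ C / ((nk - 1 : ℕ) : ℝ) :=
      le_trans (le_abs_self _) hstep
    linarith
  -- |u n - u nk| ≤ ε/2
  have haux := near_half_aux u C hCpos hC nk h1nk n hn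
  have hdiff : |u n - u nk| ≤ ε / 2 := by
    have h1 : ((n : ℝ) - nk) * C / nk ≤ ε / (2 * C) * nk * C / nk := by
      apply div_le_div_of_nonneg_right _ hnk0.le
      apply mul_le_mul_of_nonneg_right _ hCpos.le
      nlinarith
    have h2 : ε / (2 * C) * nk * C / nk = ε / 2 := by
      field_simp
    linarith [haux, h1.trans_eq h2]
  have habs : |u nk - ((k : ℝ) + 1 / 2)| ≤ ε / 2 := by
    rw [abs_le]
    constructor <;> linarith
  calc |u n - (k : ℝ) - 1 / 2| = |(u n - u nk) + (u nk - ((k : ℝ) + 1 / 2))| := by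
        ring_nf
    _ ≤ |u n - u nk| + |u nk - ((k : ℝ) + 1 / 2)| := abs_add_le _ _
    _ ≤ ε / 2 + ε / 2 := add_le_add hdiff habs
    _ = ε := by ring
end

section
/- For the sequence {2^n} (n ≥ 0), the waiting times between consecutive occurrences of leading digit 1 are always 3 or 4: if n < m are such that D(2^n) = D(2^m) = 1 and D(2^j) ≠ 1 for all n < j < m, then m - n ∈ {3, 4}. -/
open Filter

/-- For the sequence `{2^n}`, waiting times between consecutive occurrences of leading
digit 1 are always 3 or 4. -/
theorem two_pow_leadingDigit_one_gap (n m : ℕ) (hnm : n < m)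
    (h1 : HasLeadingDigit ((2 : ℝ) ^ n) 1)
    (h2 : HasLeadingDigit ((2 : ℝ) ^ m) 1)
    (hbetween : ∀ j : ℕ, n < j → j < m → ¬ HasLeadingDigit ((2 : ℝ) ^ j) 1) :
    m - n = 3 ∨ m - n = 4 := by
  obtain ⟨k, hk1, hk2⟩ := h1
  push_cast at hk1 hk2
  norm_num at hk1 hk2
  have h10 : (1:ℝ) < 10 := by norm_num
  have hpos : (0:ℝ) < 10 ^ k := zpow_pos (by norm_num) k
  have hpow : ∀ j : ℕ, (2:ℝ) ^ (n + j) = 2 ^ j * 2 ^ n := by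
    intro j; rw [pow_add]; ring
  have hadd : (10:ℝ) ^ (k + 1) = 10 * 10 ^ k := by
    rw [zpow_add_one₀ (by norm_num : (10:ℝ) ≠ 0)]; ring
  have hA : ¬ HasLeadingDigit ((2:ℝ) ^ (n + 1)) 1 := by
    rintro ⟨k', h1', h2'⟩
    push_cast at h1' h2'
    rw [hpow 1] at h1' h2'
    norm_num at h1' h2'
    have hk'k : k < k' := by
      have : (10:ℝ) ^ k < 10 ^ k' := lt_of_le_of_lt hk1 (by linarith)
      exact (zpow_lt_zpow_iff_right₀ h10).mp this
    have hkk' : k' < k + 1 := by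
      have : (10:ℝ) ^ k' < 10 ^ (k + 1) := by
        rw [hadd]; linarith
      exact (zpow_lt_zpow_iff_right₀ h10).mp this
    omega
  have hB : ¬ HasLeadingDigit ((2:ℝ) ^ (n + 2)) 1 := by
    rintro ⟨k', h1', h2'⟩
    push_cast at h1' h2'
    rw [hpow 2] at h1' h2'
    norm_num at h1' h2'
    have hk'k : k < k' := by
      have : (10:ℝ) ^ k < 10 ^ k' := by linarith
      exact (zpow_lt_zpow_iff_right₀ h10).mp this
    have hkk' : k' < k + 1 := by
      have : (10:ℝ) ^ k' < 10 ^ (k + 1) := by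
        rw [hadd]; linarith
      exact (zpow_lt_zpow_iff_right₀ h10).mp this
    omega
  have hC : HasLeadingDigit ((2:ℝ) ^ (n + 3)) 1 ∨ HasLeadingDigit ((2:ℝ) ^ (n + 4)) 1 := by
    by_cases hc : (2:ℝ) ^ (n + 3) < 10 ^ (k + 1)
    · right
      refine ⟨k + 1, ?_, ?_⟩ <;> push_cast <;> rw [hpow 4] <;> norm_num <;> rw [hadd]
      · rw [hpow 3] at hc; norm_num at hc; linarith
      · rw [hpow 3] at hc; norm_num at hc; linarith
    · left
      refine ⟨k + 1, ?_, ?_⟩ <;> push_cast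
      · linarith [le_of_not_gt hc]
      · rw [hpow 3]; norm_num; rw [hadd]; linarith
  have hm3 : n + 3 ≤ m := by
    by_contra h
    have : m = n + 1 ∨ m = n + 2 := by omega
    rcases this with rfl | rfl
    · exact hA h2
    · exact hB h2
  have hm4 : m ≤ n + 4 := by
    by_contra h
    rcases hC with hc | hc
    · exact hbetween (n + 3) (by omega) (by omega) hc
    · exact hbetween (n + 4) (by omega) (by omega) hc
  omega
end
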